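/- Let X be a compact topological space, let (f_n) be a sequence of continuous real-valued functions on X that is pointwise nondecreasing (f_n(x) ≤ f_{n+1}(x) for all n and all x ∈ X) and converges pointwise to a continuous function g : X → ℝ. Then for every ε > 0 there is no sequence (b_n) in X such that f_i(b_j) + ε < f_j(b_i) for all i < j. -/

import Mathlib

theorem stmt4 {X : Type*} [TopologicalSpace X] [CompactSpace X]
    (f : ℕ → X → ℝ) (hf : ∀ n, Continuous (f n))
    (hmono : ∀ n x, f n x ≤ f (n + 1) x)
    (g : X → ℝ) (hg : Continuous g)
    (hlim : ∀ x, Filter.Tendsto (fun n => f n x) Filter.atTop (nhds (g x)))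
    (ε : ℝ) (hε : 0 < ε) :
    ¬ ∃ b : ℕ → X, ∀ i j : ℕ, i < j → f i (b j) + ε < f j (b i) := by
  rintro ⟨b, hb⟩
  -- monotonicity in n
  have hmono' : ∀ x : X, Monotone fun n => f n x := fun x =>
    monotone_nat_of_le_succ fun n => hmono n x
  -- f n x ≤ g x
  have hle : ∀ n x, f n x ≤ g x := fun n x =>
    ge_of_tendsto (hlim x) (Filter.eventually_atTop.2 ⟨n, fun m hm => hmono' x hm⟩)
  -- open sets
  set U : ℕ → Set X := fun n => {x | g x - f n x < ε / 2} with hU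
  have hUopen : ∀ n, IsOpen (U n) := fun n =>
    isOpen_lt (hg.sub (hf n)) continuous_const
  have hUmono : Monotone U := by
    intro m n hmn x hx
    have := hmono' x hmn
    simp only [hU, Set.mem_setOf_eq] at hx ⊢
    linarith
  have hcover : Set.univ ⊆ ⋃ n, U n := by
    intro x _
    have : Filter.Tendsto (fun n => g x - f n x) Filter.atTop (nhds 0) := by
      simpa using ((tendsto_const_nhds (x := g x)).sub (hlim x))
    have := (this.eventually (eventually_lt_nhds (half_pos hε))).exists
    obtain ⟨n, hn⟩ := this
    exact Set.mem_iUnion.2 ⟨n, hn⟩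
  obtain ⟨t, ht⟩ := isCompact_univ.elim_finite_subcover U hUopen hcover
  set N := t.sup id with hN
  have hNall : ∀ x, g x - f N x < ε / 2 := by
    intro x
    obtain ⟨n, hn, hxn⟩ := Set.mem_iUnion₂.1 (ht (Set.mem_univ x))
    exact hUmono (Finset.le_sup (f := id) hn) hxn
  -- key decrease
  have key : ∀ k : ℕ, f N (b (N + k + 1)) + ε / 2 < f N (b (N + k)) := by
    intro k
    have h1 : f (N + k) (b (N + k + 1)) + ε < f (N + k + 1) (b (N + k)) :=
      hb _ _ (by omega)
    have h2 : f N (b (N + k + 1)) ≤ f (N + k) (b (N + k + 1)) :=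
      hmono' _ (by omega)
    have h3 : f (N + k + 1) (b (N + k)) ≤ g (b (N + k)) := hle _ _
    have h4 := hNall (b (N + k))
    linarith
  have hdec : ∀ k : ℕ, f N (b (N + k)) ≤ f N (b N) - k * (ε / 2) := by
    intro k
    induction k with
    | zero => simp
    | succ k ih =>
      push_cast
      have : f N (b (N + (k + 1))) + ε / 2 < f N (b (N + k)) := by
        convert key k using 3
        rfl
      linarith
  -- f N is bounded below on compact X
  obtain ⟨x₀, -, hx₀⟩ := isCompact_univ.exists_isMinOn ⟨b 0, Set.mem_univ _⟩
    (hf N).continuousOn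
  have hlb : ∀ m, f N x₀ ≤ f N (b m) := fun m => hx₀ (Set.mem_univ _)
  obtain ⟨k, hk⟩ := exists_nat_gt ((f N (b N) - f N x₀) / (ε / 2))
  have := hdec k
  have h5 := hlb (N + k)
  have : (k : ℝ) * (ε / 2) ≤ f N (b N) - f N x₀ := by linarith
  have := (div_lt_iff₀ (half_pos hε)).1 hk
  linarith
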